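/- arXiv:2307.01859 — 9 statements merged into one kernel-verified Lean document; each statement's English description precedes it below -/
import Mathlib

section
/- Let x, z ∈ ℝ^n be vectors with entries in {-1,1} (no zero entries) that are orthogonal to each other and both orthogonal to the all-ones vector. Then n ≡ 0 (mod 4). -/
open Matrix

/-- If `x, z ∈ ℝⁿ` have all entries `±1`, are orthogonal to each other, and are
both orthogonal to the all-ones vector, then `n ≡ 0 (mod 4)`. -/
theorem mod_four_of_two_orthogonal_pm_one_vectors {n : ℕ} (x z : Fin n → ℝ)
    (hx : ∀ i, x i = 1 ∨ x i = -1)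
    (hz : ∀ i, z i = 1 ∨ z i = -1)
    (hxz : x ⬝ᵥ z = 0)
    (hx1 : ∑ i, x i = 0)
    (hz1 : ∑ i, z i = 0) :
    n % 4 = 0 := by
  classical
  set S := Finset.univ.filter (fun i => x i = 1 ∧ z i = 1) with hS
  have hsum : ∑ i, (1 + x i) * (1 + z i) = (n : ℝ) := by
    have hd : ∑ i, x i * z i = 0 := hxz
    have : ∑ i, (1 + x i) * (1 + z i)
        = ∑ i, (1 + x i + z i + x i * z i) := by
      apply Finset.sum_congr rfl; intro i _; ring
    rw [this, Finset.sum_add_distrib, Finset.sum_add_distrib,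
      Finset.sum_add_distrib, hx1, hz1, hd, Finset.sum_const]
    simp
  have hsum2 : ∑ i, (1 + x i) * (1 + z i) = 4 * (S.card : ℝ) := by
    rw [← Finset.sum_filter_add_sum_filter_not Finset.univ
      (fun i => x i = 1 ∧ z i = 1) (fun i => (1 + x i) * (1 + z i))]
    have h1 : ∑ i ∈ S, (1 + x i) * (1 + z i) = 4 * (S.card : ℝ) := by
      have : ∑ i ∈ S, (1 + x i) * (1 + z i) = ∑ _i ∈ S, (4 : ℝ) := by
        apply Finset.sum_congr rfl
        intro i hi
        rw [hS, Finset.mem_filter] at hi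
        rw [hi.2.1, hi.2.2]; norm_num
      rw [this, Finset.sum_const]; ring
    have h2 : ∑ i ∈ Finset.univ.filter (fun i => ¬(x i = 1 ∧ z i = 1)),
        (1 + x i) * (1 + z i) = 0 := by
      apply Finset.sum_eq_zero
      intro i hi
      rw [Finset.mem_filter] at hi
      rcases hx i with h | h
      · rcases hz i with h' | h'
        · exact absurd ⟨h, h'⟩ hi.2
        · rw [h']; ring
      · rw [h]; ring
    rw [h1, h2, add_zero]
  have : (n : ℝ) = 4 * (S.card : ℝ) := by rw [← hsum, hsum2]
  have hn : n = 4 * S.card := by exact_mod_cast this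
  omega
end

section
/- There is no 5×5 matrix P with entries in {-1,0,1}, pairwise orthogonal nonzero columns, whose first column is the all-ones vector. -/
open Matrix

def dotL (a b : List ℤ) : ℤ := (List.zipWith (· * ·) a b).sum

def cand : List (List ℤ) := [
  [-1, -1, 0, 1, 1],
  [-1, -1, 1, 0, 1],
  [-1, -1, 1, 1, 0],
  [-1, 0, -1, 1, 1],
  [-1, 0, 0, 0, 1],
  [-1, 0, 0, 1, 0],
  [-1, 0, 1, -1, 1],
  [-1, 0, 1, 0, 0],
  [-1, 0, 1, 1, -1],
  [-1, 1, -1, 0, 1],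
  [-1, 1, -1, 1, 0],
  [-1, 1, 0, -1, 1],
  [-1, 1, 0, 0, 0],
  [-1, 1, 0, 1, -1],
  [-1, 1, 1, -1, 0],
  [-1, 1, 1, 0, -1],
  [0, -1, -1, 1, 1],
  [0, -1, 0, 0, 1],
  [0, -1, 0, 1, 0],
  [0, -1, 1, -1, 1],
  [0, -1, 1, 0, 0],
  [0, -1, 1, 1, -1],
  [0, 0, -1, 0, 1],
  [0, 0, -1, 1, 0],
  [0, 0, 0, -1, 1],
  [0, 0, 0, 1, -1],
  [0, 0, 1, -1, 0],
  [0, 0, 1, 0, -1],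
  [0, 1, -1, -1, 1],
  [0, 1, -1, 0, 0],
  [0, 1, -1, 1, -1],
  [0, 1, 0, -1, 0],
  [0, 1, 0, 0, -1],
  [0, 1, 1, -1, -1],
  [1, -1, -1, 0, 1],
  [1, -1, -1, 1, 0],
  [1, -1, 0, -1, 1],
  [1, -1, 0, 0, 0],
  [1, -1, 0, 1, -1],
  [1, -1, 1, -1, 0],
  [1, -1, 1, 0, -1],
  [1, 0, -1, -1, 1],
  [1, 0, -1, 0, 0],
  [1, 0, -1, 1, -1],
  [1, 0, 0, -1, 0],
  [1, 0, 0, 0, -1],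
  [1, 0, 1, -1, -1],
  [1, 1, -1, -1, 0],
  [1, 1, -1, 0, -1],
  [1, 1, 0, -1, -1]]

set_option maxRecDepth 40000 in
set_option maxHeartbeats 2000000 in
lemma core : ∀ a ∈ cand, ∀ b ∈ cand, dotL a b = 0 →
    ∀ c ∈ cand, dotL a c = 0 → dotL b c = 0 →
    ∀ d ∈ cand, dotL a d = 0 → dotL b d = 0 → dotL c d ≠ 0 := by decide

set_option maxRecDepth 40000 in
set_option maxHeartbeats 2000000 in
lemma mem_cand (a b c d e : ℤ)
    (ha : a = -1 ∨ a = 0 ∨ a = 1) (hb : b = -1 ∨ b = 0 ∨ b = 1)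
    (hc : c = -1 ∨ c = 0 ∨ c = 1) (hd : d = -1 ∨ d = 0 ∨ d = 1)
    (he : e = -1 ∨ e = 0 ∨ e = 1)
    (hs : a + b + c + d + e = 0)
    (hz : ¬(a = 0 ∧ b = 0 ∧ c = 0 ∧ d = 0 ∧ e = 0)) :
    [a, b, c, d, e] ∈ cand := by
  rcases ha with rfl|rfl|rfl <;> rcases hb with rfl|rfl|rfl <;>
    rcases hc with rfl|rfl|rfl <;> rcases hd with rfl|rfl|rfl <;>
    rcases he with rfl|rfl|rfl <;>
    first
      | decide
      | exact absurd hs (by decide)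
      | exact absurd ⟨rfl, rfl, rfl, rfl, rfl⟩ hz

/-- There is no `5 × 5` matrix with entries in `{-1,0,1}`, pairwise orthogonal
nonzero columns, and first column the all-ones vector. -/
theorem no_normalized_weak_hadamard_dim_five :
    ¬ ∃ P : Matrix (Fin 5) (Fin 5) ℝ,
      (∀ i j, P i j = -1 ∨ P i j = 0 ∨ P i j = 1) ∧
      (∀ j k : Fin 5, j ≠ k → Pᵀ j ⬝ᵥ Pᵀ k = 0) ∧
      (∀ j : Fin 5, Pᵀ j ≠ 0) ∧
      (∀ i, P i 0 = 1) := by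
  rintro ⟨P, hent, horth, hnz, hone⟩
  -- integer version of the columns
  set z : Fin 5 → Fin 5 → ℤ :=
    fun j i => if P i j = 1 then 1 else if P i j = 0 then 0 else -1 with hzdef
  have hcast : ∀ j i, ((z j i : ℤ) : ℝ) = P i j := by
    intro j i
    rcases hent i j with h|h|h <;> norm_num [hzdef, h]
  have hrange : ∀ j i, z j i = -1 ∨ z j i = 0 ∨ z j i = 1 := by
    intro j i
    rcases hent i j with h|h|h <;> norm_num [hzdef, h]
  have key : ∀ j k : Fin 5, j ≠ k → ∑ i, z j i * z k i = (0 : ℤ) := by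
    intro j k hjk
    have h1 := horth j k hjk
    simp only [dotProduct, transpose_apply] at h1
    have h2 : ((∑ i, z j i * z k i : ℤ) : ℝ) = 0 := by
      push_cast
      simp only [hcast]
      exact h1
    exact_mod_cast h2
  have hz1 : ∀ i, z 0 i = 1 := by
    intro i; simp [hzdef, hone i]
  have hsum : ∀ j : Fin 5, j ≠ 0 → z j 0 + z j 1 + z j 2 + z j 3 + z j 4 = 0 := by
    intro j hj
    have h3 := key 0 j (Ne.symm hj)
    simp only [hz1, one_mul] at h3
    rw [Fin.sum_univ_five] at h3
    linarith
  have hzne : ∀ j, ¬(z j 0 = 0 ∧ z j 1 = 0 ∧ z j 2 = 0 ∧ z j 3 = 0 ∧ z j 4 = 0) := by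
    rintro j ⟨e0, e1, e2, e3, e4⟩
    apply hnz j
    funext i
    have h1 := hcast j i
    have h2 : z j i = 0 := by fin_cases i <;> assumption
    rw [h2] at h1
    simpa [transpose_apply] using h1.symm
  have hmem : ∀ j : Fin 5, j ≠ 0 →
      [z j 0, z j 1, z j 2, z j 3, z j 4] ∈ cand := fun j hj =>
    mem_cand _ _ _ _ _ (hrange j 0) (hrange j 1) (hrange j 2) (hrange j 3) (hrange j 4)
      (hsum j hj) (hzne j)
  have hdL : ∀ j k : Fin 5,
      dotL [z j 0, z j 1, z j 2, z j 3, z j 4] [z k 0, z k 1, z k 2, z k 3, z k 4]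
        = ∑ i, z j i * z k i := by
    intro j k
    simp [dotL, Fin.sum_univ_five]
    ring
  have kd : ∀ j k : Fin 5, j ≠ k →
      dotL [z j 0, z j 1, z j 2, z j 3, z j 4] [z k 0, z k 1, z k 2, z k 3, z k 4] = 0 := by
    intro j k hjk; rw [hdL]; exact key j k hjk
  exact core _ (hmem 1 (by decide)) _ (hmem 2 (by decide)) (kd 1 2 (by decide))
    _ (hmem 3 (by decide)) (kd 1 3 (by decide)) (kd 2 3 (by decide))
    _ (hmem 4 (by decide)) (kd 1 4 (by decide)) (kd 2 4 (by decide)) (kd 3 4 (by decide))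
end

section
/- Let A be an m×m weak Hadamard matrix and B an n×n weak Hadamard matrix, and suppose the columns of A are pairwise orthogonal. Then the Kronecker product A ⊗ B is a weak Hadamard matrix. -/
open Matrix Kronecker

/-- A tridiagonality predicate with respect to the natural linear ordering. -/
def TridiagFin {N : ℕ} (M : Matrix (Fin N) (Fin N) ℝ) : Prop :=
  ∀ i j : Fin N, ((i : ℕ) + 1 < (j : ℕ) ∨ (j : ℕ) + 1 < (i : ℕ)) → M i j = 0

/-- If `A` is a weak Hadamard matrix with pairwise orthogonal columns and `B` is a
weak Hadamard matrix, then `A ⊗ B` is a weak Hadamard matrix (with respect to the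
ordering `(a, b) ↦ a * n + b` of the product index set). -/
theorem kronecker_weak_hadamard {m n : ℕ}
    (A : Matrix (Fin m) (Fin m) ℝ) (B : Matrix (Fin n) (Fin n) ℝ)
    (hAent : ∀ i j, A i j = -1 ∨ A i j = 0 ∨ A i j = 1)
    (hAtri : TridiagFin (Aᵀ * A))
    (hAorth : ∀ j k : Fin m, j ≠ k → Aᵀ j ⬝ᵥ Aᵀ k = 0)
    (hBent : ∀ i j, B i j = -1 ∨ B i j = 0 ∨ B i j = 1)
    (hBtri : TridiagFin (Bᵀ * B)) :
    (∀ p q, (A ⊗ₖ B) p q = -1 ∨ (A ⊗ₖ B) p q = 0 ∨ (A ⊗ₖ B) p q = 1) ∧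
      (∀ p q : Fin m × Fin n,
        ((p.1 : ℕ) * n + (p.2 : ℕ) + 1 < (q.1 : ℕ) * n + (q.2 : ℕ) ∨
          (q.1 : ℕ) * n + (q.2 : ℕ) + 1 < (p.1 : ℕ) * n + (p.2 : ℕ)) →
        ((A ⊗ₖ B)ᵀ * (A ⊗ₖ B)) p q = 0) := by
  constructor
  · intro p q
    rw [kroneckerMap_apply]
    rcases hAent p.1 q.1 with h | h | h <;> rcases hBent p.2 q.2 with h' | h' | h' <;>
      simp [h, h']
  · intro p q hpq
    have key : ((A ⊗ₖ B)ᵀ * (A ⊗ₖ B)) p q = (Aᵀ * A) p.1 q.1 * (Bᵀ * B) p.2 q.2 := by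
      rw [← kroneckerMap_transpose, ← mul_kronecker_mul, kroneckerMap_apply]
    rw [key]
    by_cases h1 : p.1 = q.1
    · have hB0 : (Bᵀ * B) p.2 q.2 = 0 := by
        apply hBtri
        have h1' : (p.1 : ℕ) * n = (q.1 : ℕ) * n := by rw [h1]
        rcases hpq with h | h
        · left; omega
        · right; omega
      rw [hB0, mul_zero]
    · have hA0 : (Aᵀ * A) p.1 q.1 = 0 := by
        have := hAorth p.1 q.1 h1
        rw [mul_apply]
        simpa [dotProduct, transpose_apply] using this
      rw [hA0, zero_mul]
end

section
/- The Kronecker product of a Hadamard matrix and a weak Hadamard matrix is a weak Hadamard matrix. -/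
open Matrix Kronecker

/-- The Kronecker product of a Hadamard matrix and a weak Hadamard matrix is a
weak Hadamard matrix (with respect to the ordering `(a, b) ↦ a * n + b` of the
product index set). -/
theorem hadamard_kronecker_weak_hadamard {m n : ℕ}
    (H : Matrix (Fin m) (Fin m) ℝ) (P : Matrix (Fin n) (Fin n) ℝ)
    (hHent : ∀ i j, H i j = 1 ∨ H i j = -1)
    (hH : Hᵀ * H = (m : ℝ) • (1 : Matrix (Fin m) (Fin m) ℝ))
    (hPent : ∀ i j, P i j = -1 ∨ P i j = 0 ∨ P i j = 1)
    (hPtri : TridiagFin (Pᵀ * P)) :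
    (∀ p q, (H ⊗ₖ P) p q = -1 ∨ (H ⊗ₖ P) p q = 0 ∨ (H ⊗ₖ P) p q = 1) ∧
      (∀ p q : Fin m × Fin n,
        ((p.1 : ℕ) * n + (p.2 : ℕ) + 1 < (q.1 : ℕ) * n + (q.2 : ℕ) ∨
          (q.1 : ℕ) * n + (q.2 : ℕ) + 1 < (p.1 : ℕ) * n + (p.2 : ℕ)) →
        ((H ⊗ₖ P)ᵀ * (H ⊗ₖ P)) p q = 0) := by
  constructor
  · intro p q
    rw [kroneckerMap_apply]
    rcases hHent p.1 q.1 with h1 | h1 <;> rcases hPent p.2 q.2 with h2 | h2 | h2 <;>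
      rw [h1, h2] <;> norm_num
  · intro p q hpq
    have key : (H ⊗ₖ P)ᵀ * (H ⊗ₖ P) = (Hᵀ * H) ⊗ₖ (Pᵀ * P) := by
      rw [Matrix.mul_kronecker_mul, Matrix.kroneckerMap_transpose]
    rw [key, kroneckerMap_apply, hH]
    by_cases h1 : p.1 = q.1
    · have hn : 0 < n := p.2.pos
      have h2 : (p.2 : ℕ) + 1 < (q.2 : ℕ) ∨ (q.2 : ℕ) + 1 < (p.2 : ℕ) := by
        have h1' : (p.1:ℕ) = q.1 := congrArg Fin.val h1
        have h1'' : (p.1:ℕ)*n = (q.1:ℕ)*n := by rw [h1']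
        have hp2 := p.2.isLt; have hq2 := q.2.isLt
        omega
      rw [hPtri p.2 q.2 h2, mul_zero]
    · -- the first coordinates differ, so the identity factor vanishes
      have : ((m : ℝ) • (1 : Matrix (Fin m) (Fin m) ℝ)) p.1 q.1 = 0 := by
        simp [Matrix.one_apply, h1]
      rw [this, zero_mul]
end

section
/- If A is a normalized weak Hadamard matrix (first column the all-ones vector), then H_2 ⊗ A is a normalized weak Hadamard matrix, where H_2 = [[1,1],[1,-1]]. -/
open Matrix Kronecker

/-- The `2 × 2` Hadamard matrix. -/
def H2 : Matrix (Fin 2) (Fin 2) ℝ := !![1, 1; 1, -1]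

lemma H2tH2 : H2ᵀ * H2 = !![2, 0; 0, 2] := by
  ext i j
  fin_cases i <;> fin_cases j <;>
    simp [H2, Matrix.mul_apply, Fin.sum_univ_two, Matrix.transpose_apply, Matrix.vecHead, Matrix.vecTail] <;> norm_num

/-- If `A` is a normalized weak Hadamard matrix (first column all ones), then
`H₂ ⊗ A` is a normalized weak Hadamard matrix
(tridiagonality with respect to the ordering `(a, b) ↦ a * n + b`). -/
theorem H2_kronecker_normalized_weak_hadamard {n : ℕ} (hn : 0 < n)
    (A : Matrix (Fin n) (Fin n) ℝ)
    (hAent : ∀ i j, A i j = -1 ∨ A i j = 0 ∨ A i j = 1)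
    (hAtri : TridiagFin (Aᵀ * A))
    (hAnorm : ∀ i, A i ⟨0, hn⟩ = 1) :
    (∀ p q, (H2 ⊗ₖ A) p q = -1 ∨ (H2 ⊗ₖ A) p q = 0 ∨ (H2 ⊗ₖ A) p q = 1) ∧
      (∀ p q : Fin 2 × Fin n,
        ((p.1 : ℕ) * n + (p.2 : ℕ) + 1 < (q.1 : ℕ) * n + (q.2 : ℕ) ∨
          (q.1 : ℕ) * n + (q.2 : ℕ) + 1 < (p.1 : ℕ) * n + (p.2 : ℕ)) →
        ((H2 ⊗ₖ A)ᵀ * (H2 ⊗ₖ A)) p q = 0) ∧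
      (∀ p, (H2 ⊗ₖ A) p ((0 : Fin 2), (⟨0, hn⟩ : Fin n)) = 1) := by
  have key : (H2 ⊗ₖ A)ᵀ * (H2 ⊗ₖ A) = (H2ᵀ * H2) ⊗ₖ (Aᵀ * A) := by
    rw [Matrix.mul_kronecker_mul, Matrix.kroneckerMap_transpose]
  refine ⟨?_, ?_, ?_⟩
  · rintro ⟨a, b⟩ ⟨c, d⟩
    simp only [Matrix.kroneckerMap_apply]
    rcases hAent b d with h | h | h <;>
      fin_cases a <;> fin_cases c <;> simp [H2, h]
  · rintro ⟨a, b⟩ ⟨c, d⟩ h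
    dsimp only at h
    rw [key, Matrix.kroneckerMap_apply]
    by_cases hac : a = c
    · subst hac
      have : (b : ℕ) + 1 < (d : ℕ) ∨ (d : ℕ) + 1 < (b : ℕ) := by
        rcases h with h | h <;> [left; right] <;> omega
      rw [hAtri b d this, mul_zero]
    · have : (H2ᵀ * H2) a c = 0 := by
        rw [H2tH2]
        fin_cases a <;> fin_cases c <;> simp_all
      rw [this, zero_mul]
  · rintro ⟨a, b⟩
    simp only [Matrix.kroneckerMap_apply, hAnorm b]
    fin_cases a <;> simp [H2]
end

section
/- Let G and H be square {-1,0,1}-matrices of the same size such that H^T H + G^T G is tridiagonal and H^T G = G^T H. Then the block matrix [[H, G],[G, -H]] is a weak Hadamard matrix. -/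
open Matrix

/-- Encoding of the two-block index set `Fin n ⊕ Fin n` into `ℕ`, listing the
first block before the second. -/
def encSum {n : ℕ} : Fin n ⊕ Fin n → ℕ :=
  Sum.elim (fun i => (i : ℕ)) fun i => n + (i : ℕ)

/-- If `G, H` are `{-1,0,1}`-matrices with `Hᵀ H + Gᵀ G` tridiagonal and
`Hᵀ G = Gᵀ H`, then the block matrix `[[H, G], [G, -H]]` is a weak Hadamard
matrix. -/
theorem block_weak_hadamard {n : ℕ} (G H : Matrix (Fin n) (Fin n) ℝ)
    (hGent : ∀ i j, G i j = -1 ∨ G i j = 0 ∨ G i j = 1)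
    (hHent : ∀ i j, H i j = -1 ∨ H i j = 0 ∨ H i j = 1)
    (htri : ∀ i j : Fin n, ((i : ℕ) + 1 < (j : ℕ) ∨ (j : ℕ) + 1 < (i : ℕ)) →
      (Hᵀ * H + Gᵀ * G) i j = 0)
    (hcomm : Hᵀ * G = Gᵀ * H) :
    (∀ p q, (Matrix.fromBlocks H G G (-H)) p q = -1 ∨
        (Matrix.fromBlocks H G G (-H)) p q = 0 ∨
        (Matrix.fromBlocks H G G (-H)) p q = 1) ∧
      (∀ p q : Fin n ⊕ Fin n, (encSum p + 1 < encSum q ∨ encSum q + 1 < encSum p) →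
        ((Matrix.fromBlocks H G G (-H))ᵀ * Matrix.fromBlocks H G G (-H)) p q = 0) := by
  have key : (Matrix.fromBlocks H G G (-H))ᵀ * Matrix.fromBlocks H G G (-H) =
      Matrix.fromBlocks (Hᵀ * H + Gᵀ * G) 0 0 (Hᵀ * H + Gᵀ * G) := by
    rw [Matrix.fromBlocks_transpose, Matrix.fromBlocks_multiply]
    have h1 : Hᵀ * G + Gᵀ * -H = 0 := by rw [Matrix.mul_neg, hcomm]; abel
    have h2 : Gᵀ * H + (-H)ᵀ * G = 0 := by
      rw [Matrix.transpose_neg, Matrix.neg_mul, hcomm]; abel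
    have h3 : Gᵀ * G + (-H)ᵀ * -H = Hᵀ * H + Gᵀ * G := by
      rw [Matrix.transpose_neg, Matrix.neg_mul, Matrix.mul_neg, neg_neg]; abel
    rw [h1, h2, h3]
  constructor
  · rintro (i|i) (j|j)
    · exact hHent i j
    · exact hGent i j
    · exact hGent i j
    · rcases hHent i j with h | h | h <;>
        simp [Matrix.fromBlocks, h]
  · rintro (i|i) (j|j) h <;> simp only [encSum, Sum.elim_inl, Sum.elim_inr] at h <;>
      rw [key]
    · simpa using htri i j h
    · simp
    · simp
    · have : (i : ℕ) + 1 < (j : ℕ) ∨ (j : ℕ) + 1 < (i : ℕ) := by omega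
      simpa using htri i j this
end

section
/- Let G and H be n×n weak Hadamard matrices whose first columns both equal a vector x, where x is orthogonal to every other column of G and of H. Let X be the n×n matrix with first column x and all other columns zero. Then the block matrix P = [[H, X],[X, -G]] is a weak Hadamard matrix. Moreover, if G and H each have pairwise orthogonal columns, then so does P. -/
open Matrix

/-- Let `G` and `H` be weak Hadamard matrices whose first columns both equal `x`,
with `x` orthogonal to every other column of `G` and of `H`, and let `X` have
first column `x` and all other columns zero. Then `P = [[H, X], [X, -G]]` is a
weak Hadamard matrix; moreover if `G` and `H` have pairwise orthogonal columns,
then so does `P`. -/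
theorem block_weak_hadamard_with_column {n : ℕ} (hn : 0 < n)
    (G H : Matrix (Fin n) (Fin n) ℝ) (x : Fin n → ℝ)
    (hGent : ∀ i j, G i j = -1 ∨ G i j = 0 ∨ G i j = 1)
    (hHent : ∀ i j, H i j = -1 ∨ H i j = 0 ∨ H i j = 1)
    (hGtri : ∀ i j : Fin n, ((i : ℕ) + 1 < (j : ℕ) ∨ (j : ℕ) + 1 < (i : ℕ)) →
      (Gᵀ * G) i j = 0)
    (hHtri : ∀ i j : Fin n, ((i : ℕ) + 1 < (j : ℕ) ∨ (j : ℕ) + 1 < (i : ℕ)) →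
      (Hᵀ * H) i j = 0)
    (hGx : ∀ i, G i ⟨0, hn⟩ = x i)
    (hHx : ∀ i, H i ⟨0, hn⟩ = x i)
    (hGorth : ∀ j : Fin n, j ≠ ⟨0, hn⟩ → x ⬝ᵥ Gᵀ j = 0)
    (hHorth : ∀ j : Fin n, j ≠ ⟨0, hn⟩ → x ⬝ᵥ Hᵀ j = 0) :
    let X : Matrix (Fin n) (Fin n) ℝ :=
      Matrix.of fun i j => if j = (⟨0, hn⟩ : Fin n) then x i else 0
    let P := Matrix.fromBlocks H X X (-G)
    (∀ p q, P p q = -1 ∨ P p q = 0 ∨ P p q = 1) ∧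
      (∀ p q : Fin n ⊕ Fin n, (encSum p + 1 < encSum q ∨ encSum q + 1 < encSum p) →
        (Pᵀ * P) p q = 0) ∧
      (((∀ j k : Fin n, j ≠ k → Hᵀ j ⬝ᵥ Hᵀ k = 0) ∧
          (∀ j k : Fin n, j ≠ k → Gᵀ j ⬝ᵥ Gᵀ k = 0)) →
        ∀ p q : Fin n ⊕ Fin n, p ≠ q → Pᵀ p ⬝ᵥ Pᵀ q = 0) := by

  intro X P
  have z : Fin n := ⟨0, hn⟩
  have hHcol : Hᵀ (⟨0, hn⟩ : Fin n) = x := funext fun i => hHx i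
  have hGcol : Gᵀ (⟨0, hn⟩ : Fin n) = x := funext fun i => hGx i
  have hPP : ∀ p q : Fin n ⊕ Fin n, (Pᵀ * P) p q = Pᵀ p ⬝ᵥ Pᵀ q := by
    intro p q
    simp [Matrix.mul_apply, dotProduct]
  have hHH : ∀ j k : Fin n, (Hᵀ * H) j k = Hᵀ j ⬝ᵥ Hᵀ k := by
    intro j k; simp [Matrix.mul_apply, dotProduct]
  have hGG : ∀ j k : Fin n, (Gᵀ * G) j k = Gᵀ j ⬝ᵥ Gᵀ k := by
    intro j k; simp [Matrix.mul_apply, dotProduct]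
  have dot_ll : ∀ j k : Fin n, Pᵀ (Sum.inl j) ⬝ᵥ Pᵀ (Sum.inl k) =
      (Hᵀ * H) j k + (if j = (⟨0, hn⟩ : Fin n) ∧ k = (⟨0, hn⟩ : Fin n)
        then x ⬝ᵥ x else 0) := by
    intro j k
    by_cases hj : j = (⟨0, hn⟩ : Fin n) <;> by_cases hk : k = (⟨0, hn⟩ : Fin n) <;>
      simp [P, X, dotProduct, Fintype.sum_sum_type, Matrix.mul_apply, hj, hk,
        Finset.sum_add_distrib]
  have dot_rr : ∀ j k : Fin n, Pᵀ (Sum.inr j) ⬝ᵥ Pᵀ (Sum.inr k) =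
      (Gᵀ * G) j k + (if j = (⟨0, hn⟩ : Fin n) ∧ k = (⟨0, hn⟩ : Fin n)
        then x ⬝ᵥ x else 0) := by
    intro j k
    by_cases hj : j = (⟨0, hn⟩ : Fin n) <;> by_cases hk : k = (⟨0, hn⟩ : Fin n) <;>
      simp [P, X, dotProduct, Fintype.sum_sum_type, Matrix.mul_apply, hj, hk,
        Finset.sum_add_distrib, add_comm]
  have dot_lr : ∀ j k : Fin n, Pᵀ (Sum.inl j) ⬝ᵥ Pᵀ (Sum.inr k) = 0 := by
    intro j k
    by_cases hj : j = (⟨0, hn⟩ : Fin n) <;> by_cases hk : k = (⟨0, hn⟩ : Fin n)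
    · subst hj; subst hk
      have h1 : (∑ i, H i (⟨0, hn⟩ : Fin n) * x i) = x ⬝ᵥ x := by
        simp [dotProduct, hHx, mul_comm]
      have h2 : (∑ i, x i * G i (⟨0, hn⟩ : Fin n)) = x ⬝ᵥ x := by
        simp [dotProduct, hGx]
      simp [P, X, dotProduct, Fintype.sum_sum_type, h1, h2]
    · have h2 := hGorth k hk
      simp only [dotProduct, Matrix.transpose_apply] at h2
      subst hj
      simp [P, X, dotProduct, Fintype.sum_sum_type, hk, h2]
    · have h1 := hHorth j hj
      simp only [dotProduct, Matrix.transpose_apply] at h1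
      have h1' : (∑ i, H i j * x i) = 0 := by
        rw [← h1]; exact Finset.sum_congr rfl fun i _ => mul_comm _ _
      subst hk
      simp [P, X, dotProduct, Fintype.sum_sum_type, hj, h1']
    · simp [P, X, dotProduct, Fintype.sum_sum_type, hj, hk]
  refine ⟨?_, ?_, ?_⟩
  · rintro (i | i) (j | j)
    · exact hHent i j
    · simp only [P, X, fromBlocks_apply₁₂, of_apply]
      split
      · rw [← hGx]; exact hGent i _
      · right; left; rfl
    · simp only [P, X, fromBlocks_apply₂₁, of_apply]
      split
      · rw [← hGx]; exact hGent i _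
      · right; left; rfl
    · show -G i j = -1 ∨ -G i j = 0 ∨ -G i j = 1
      rcases hGent i j with h | h | h <;> rw [h] <;> norm_num
  · rintro (j | j) (k | k) h <;> simp only [encSum, Sum.elim_inl, Sum.elim_inr] at h <;>
      rw [hPP]
    · rw [dot_ll, hHtri j k h, if_neg, add_zero]
      rintro ⟨rfl, rfl⟩
      simp at h
    · exact dot_lr j k
    · rw [dotProduct_comm]; exact dot_lr k j
    · rw [dot_rr, hGtri j k (by omega), if_neg, add_zero]
      rintro ⟨rfl, rfl⟩
      simp at h
  · rintro ⟨hHo, hGo⟩ (j | j) (k | k) hpq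
    · have hjk : j ≠ k := fun e => hpq (by rw [e])
      rw [dot_ll, hHH, hHo j k hjk, if_neg, add_zero]
      rintro ⟨rfl, rfl⟩; exact hjk rfl
    · exact dot_lr j k
    · rw [dotProduct_comm]; exact dot_lr k j
    · have hjk : j ≠ k := fun e => hpq (by rw [e])
      rw [dot_rr, hGG, hGo j k hjk, if_neg, add_zero]
      rintro ⟨rfl, rfl⟩; exact hjk rfl
end

section
/- Let L be the Laplacian of an integer-weighted graph on n vertices. If x is an eigenvector of L with entries in {-1,1} (no zero entries) and eigenvalue λ, then λ is an even integer. -/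
open Matrix

/-- If the Laplacian `L = D - A` of an integer-weighted graph has an eigenvector
with all entries `±1` and eigenvalue `λ`, then `λ` is an even integer. -/
theorem laplacian_eigenvalue_even_of_pm_one_eigenvector {n : ℕ} (hn : 0 < n)
    (A : Matrix (Fin n) (Fin n) ℤ)
    (hsymm : Aᵀ = A)
    (hdiag : ∀ i, A i i = 0)
    (x : Fin n → ℝ)
    (hx : ∀ i, x i = 1 ∨ x i = -1)
    (lam : ℝ)
    (heig : (Matrix.of fun i j =>
        ((if i = j then ∑ k, A i k else 0 : ℤ) : ℝ) - (A i j : ℝ)).mulVec x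
      = lam • x) :
    ∃ m : ℤ, lam = 2 * (m : ℝ) := by
  classical
  set i : Fin n := ⟨0, hn⟩ with hi
  have h := congrFun heig i
  simp only [Matrix.mulVec, dotProduct, Matrix.of_apply, Pi.smul_apply,
    smul_eq_mul] at h
  have hxx : ∀ j, x j * x j = 1 := by
    intro j; rcases hx j with h1 | h1 <;> rw [h1] <;> norm_num
  set s : Fin n → ℤ := fun j => if x i * x j = 1 then 0 else A i j with hs
  refine ⟨∑ j, s j, ?_⟩
  have hl : lam = ∑ j, (((if i = j then ∑ k, A i k else 0 : ℤ) : ℝ)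
      - (A i j : ℝ)) * x j * x i := by
    rw [← Finset.sum_mul, h, mul_assoc, hxx i, mul_one]
  have hsplit : ∀ j, (((if i = j then ∑ k, A i k else 0 : ℤ) : ℝ)
      - (A i j : ℝ)) * x j * x i
      = ((if i = j then ∑ k, A i k else 0 : ℤ) : ℝ) * (x j * x i)
        - (A i j : ℝ) * (x i * x j) := by
    intro j; ring
  rw [hl]
  simp only [hsplit]
  rw [Finset.sum_sub_distrib]
  have h1 : ∑ j, ((if i = j then ∑ k, A i k else 0 : ℤ) : ℝ) * (x j * x i)
      = ((∑ k, A i k : ℤ) : ℝ) := by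
    rw [Finset.sum_eq_single i]
    · simp [hxx i]
    · intro b _ hb; simp [Ne.symm hb]
    · simp
  rw [h1]
  push_cast
  rw [← Finset.sum_sub_distrib, Finset.mul_sum]
  refine Finset.sum_congr rfl fun j _ => ?_
  simp only [hs]
  rcases hx i with h1 | h1 <;> rcases hx j with h2 | h2 <;>
    simp [h1, h2] <;> norm_num <;> ring
end

section
/- Let L_X, L_Y be Laplacians of weighted graphs on n vertices both diagonalized by S (first column all-ones, others orthogonal to it), with diagonal forms Λ_1 = diag(0,λ_2,...,λ_n) and Λ_2 = diag(0,θ_2,...,θ_n). If Y is k-regular (D(Y) = kI), then the merge Laplacian M = [[w₁L_X + w₂D_Y, -w₂A_Y],[-w₂A_Y, w₁L_X + w₂D_Y]] is diagonalized by [[S,S],[S,-S]], with resulting diagonal diag(0, w₁λ_2+w₂θ_2, ..., w₁λ_n+w₂θ_n, 2w₂k, w₁λ_2+w₂(2k-θ_2), ..., w₁λ_n+w₂(2k-θ_n)). -/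
open Matrix

/-- If `L_X` and `L_Y = k•1 - A_Y` (with `Y` `k`-regular, so `D_Y = k•1`) are both
diagonalized by `S` (first column all-ones, other columns orthogonal to it), with
diagonal forms `diag(0, λ₂, …, λₙ)` and `diag(0, θ₂, …, θₙ)`, then the merge
Laplacian is diagonalized by `[[S, S], [S, -S]]` with resulting diagonal
`diag(0, w₁λ₂+w₂θ₂, …, 2w₂k, w₁λ₂+w₂(2k-θ₂), …)`. -/
theorem merge_diagonalization {n : ℕ} [NeZero n]
    (LX AY S : Matrix (Fin n) (Fin n) ℝ) (k w1 w2 : ℝ)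
    (hSinv : IsUnit S)
    (hSone : ∀ i, S i 0 = 1)
    (horth : ∀ j : Fin n, j ≠ 0 → ∑ i, S i j = 0)
    (d1 d2 : Fin n → ℝ) (hd10 : d1 0 = 0) (hd20 : d2 0 = 0)
    (hX : S⁻¹ * LX * S = Matrix.diagonal d1)
    (hY : S⁻¹ * (k • (1 : Matrix (Fin n) (Fin n) ℝ) - AY) * S = Matrix.diagonal d2) :
    let M := Matrix.fromBlocks
      (w1 • LX + (w2 * k) • (1 : Matrix (Fin n) (Fin n) ℝ)) (-(w2 • AY))
      (-(w2 • AY)) (w1 • LX + (w2 * k) • (1 : Matrix (Fin n) (Fin n) ℝ))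
    let T := Matrix.fromBlocks S S S (-S)
    T⁻¹ * M * T = Matrix.diagonal (Sum.elim
      (fun j => if j = 0 then 0 else w1 * d1 j + w2 * d2 j)
      (fun j => if j = 0 then 2 * w2 * k else w1 * d1 j + w2 * (2 * k - d2 j))) := by
  intro M T
  have hdet : IsUnit S.det := (Matrix.isUnit_iff_isUnit_det S).mp hSinv
  have hS1 : S * S⁻¹ = 1 := Matrix.mul_nonsing_inv S hdet
  have hS2 : S⁻¹ * S = 1 := Matrix.nonsing_inv_mul S hdet
  have hLX : LX * S = S * Matrix.diagonal d1 := by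
    calc LX * S = S * S⁻¹ * LX * S := by rw [hS1, one_mul]
    _ = S * (S⁻¹ * LX * S) := by simp [Matrix.mul_assoc]
    _ = S * Matrix.diagonal d1 := by rw [hX]
  have hAY : AY * S = k • S - S * Matrix.diagonal d2 := by
    have h : (k • (1 : Matrix (Fin n) (Fin n) ℝ) - AY) * S = S * Matrix.diagonal d2 := by
      calc (k • (1 : Matrix (Fin n) (Fin n) ℝ) - AY) * S
          = S * S⁻¹ * (k • (1 : Matrix (Fin n) (Fin n) ℝ) - AY) * S := by rw [hS1, one_mul]
      _ = S * (S⁻¹ * (k • (1 : Matrix (Fin n) (Fin n) ℝ) - AY) * S) := by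
          simp [Matrix.mul_assoc]
      _ = S * Matrix.diagonal d2 := by rw [hY]
    have h2 : k • S - AY * S = S * Matrix.diagonal d2 := by
      rw [← h, Matrix.sub_mul, Matrix.smul_mul, Matrix.one_mul]
    linear_combination (norm := module) -h2
  set U : Matrix (Fin n ⊕ Fin n) (Fin n ⊕ Fin n) ℝ :=
    Matrix.fromBlocks ((1/2 : ℝ) • S⁻¹) ((1/2 : ℝ) • S⁻¹)
      ((1/2 : ℝ) • S⁻¹) (-((1/2 : ℝ) • S⁻¹)) with hU
  have hTU : T * U = 1 := by
    rw [show (1 : Matrix (Fin n ⊕ Fin n) (Fin n ⊕ Fin n) ℝ) = Matrix.fromBlocks 1 0 0 1 from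
      (Matrix.fromBlocks_one).symm]
    simp only [T, hU, Matrix.fromBlocks_multiply, Matrix.mul_smul, Matrix.mul_neg,
      Matrix.neg_mul, hS1]
    rw [Matrix.fromBlocks_inj]
    refine ⟨by module, by module, by module, by module⟩
  have hUT : U * T = 1 := by
    rw [show (1 : Matrix (Fin n ⊕ Fin n) (Fin n ⊕ Fin n) ℝ) = Matrix.fromBlocks 1 0 0 1 from
      (Matrix.fromBlocks_one).symm]
    simp only [T, hU, Matrix.fromBlocks_multiply, Matrix.smul_mul, Matrix.mul_neg,
      Matrix.neg_mul, hS2]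
    rw [Matrix.fromBlocks_inj]
    refine ⟨by module, by module, by module, by module⟩
  have hTinv : T⁻¹ = U := Matrix.inv_eq_right_inv hTU
  have hdiag : Matrix.diagonal (Sum.elim
      (fun j : Fin n => if j = 0 then 0 else w1 * d1 j + w2 * d2 j)
      (fun j : Fin n => if j = 0 then 2 * w2 * k else w1 * d1 j + w2 * (2 * k - d2 j)))
      = Matrix.fromBlocks
        (Matrix.diagonal (fun j => w1 * d1 j + w2 * d2 j)) 0 0
        (Matrix.diagonal (fun j => w1 * d1 j + 2 * w2 * k - w2 * d2 j)) := by
    rw [Matrix.fromBlocks_diagonal]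
    refine congrArg Matrix.diagonal (funext fun x => ?_)
    rcases x with j | j <;> by_cases h : j = 0 <;>
      simp only [Sum.elim_inl, Sum.elim_inr, h, if_true, if_false, hd10, hd20] <;> ring
  rw [hdiag]
  have hMT : M * T = T * Matrix.fromBlocks
        (Matrix.diagonal (fun j => w1 * d1 j + w2 * d2 j)) 0 0
        (Matrix.diagonal (fun j => w1 * d1 j + 2 * w2 * k - w2 * d2 j)) := by
    have hda : Matrix.diagonal (fun j => w1 * d1 j + w2 * d2 j)
        = w1 • Matrix.diagonal d1 + w2 • Matrix.diagonal d2 := by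
      ext i j
      rcases eq_or_ne i j with h | h <;> simp [h, Matrix.diagonal_apply_ne]
    have hdb : Matrix.diagonal (fun j => w1 * d1 j + 2 * w2 * k - w2 * d2 j)
        = w1 • Matrix.diagonal d1 + (2 * w2 * k) • (1 : Matrix (Fin n) (Fin n) ℝ)
          - w2 • Matrix.diagonal d2 := by
      ext i j
      rcases eq_or_ne i j with h | h <;>
        simp [h, Matrix.diagonal_apply_ne, Matrix.one_apply_ne]
    simp only [M, T, Matrix.fromBlocks_multiply, hda, hdb]
    rw [Matrix.fromBlocks_inj]
    refine ⟨?_, ?_, ?_, ?_⟩ <;>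
      · simp only [Matrix.add_mul, Matrix.smul_mul, Matrix.neg_mul, Matrix.mul_neg,
          Matrix.one_mul, Matrix.mul_add, Matrix.mul_sub, Matrix.mul_smul, Matrix.mul_one,
          Matrix.mul_zero, Matrix.zero_mul, add_zero, zero_add, hLX, hAY]
        module
  calc T⁻¹ * M * T = U * (M * T) := by rw [hTinv, Matrix.mul_assoc]
  _ = U * T * Matrix.fromBlocks
        (Matrix.diagonal (fun j => w1 * d1 j + w2 * d2 j)) 0 0
        (Matrix.diagonal (fun j => w1 * d1 j + 2 * w2 * k - w2 * d2 j)) := by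
      rw [hMT, Matrix.mul_assoc]
  _ = _ := by rw [hUT, Matrix.one_mul]
end
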